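/- arXiv:2502.09299 — 3 statements merged into one kernel-verified Lean document; each statement's English description precedes it below -/
import Mathlib

section
/- Any bijection between finite equal-cardinality sets S, T ⊆ ℤ² that moves every point weakly downward within its own column (preserving x-coordinate and weakly decreasing y-coordinate) is a minimum-weight perfect matching with respect to L1 distance. -/
/-- L1 (Manhattan) distance on ℤ². -/
def L1 (a b : ℤ × ℤ) : ℤ := |a.1 - b.1| + |a.2 - b.2|

theorem downward_bijection_is_mwpm (S T : Finset (ℤ × ℤ)) (hcard : S.card = T.card)
    (f : S → T) (hf : Function.Bijective f)
    (hcol : ∀ s : S, ((f s : ℤ × ℤ)).1 = (s : ℤ × ℤ).1)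
    (hdown : ∀ s : S, ((f s : ℤ × ℤ)).2 ≤ (s : ℤ × ℤ).2) :
    ∀ g : S → T, Function.Bijective g →
      ∑ s : S, L1 (s : ℤ × ℤ) (f s : ℤ × ℤ) ≤ ∑ s : S, L1 (s : ℤ × ℤ) (g s : ℤ × ℤ) := by
  intro g hg
  have key : ∀ h : S → T, Function.Bijective h →
      ∑ s : S, ((h s : ℤ × ℤ)).2 = ∑ t : T, (t : ℤ × ℤ).2 := by
    intro h hh
    exact Fintype.sum_bijective h hh _ _ (fun s => rfl)
  have hfsum : ∑ s : S, L1 (s : ℤ × ℤ) (f s : ℤ × ℤ)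
      = ∑ s : S, ((s : ℤ × ℤ).2 - ((f s : ℤ × ℤ)).2) := by
    refine Finset.sum_congr rfl fun s _ => ?_
    have h1 : (s : ℤ × ℤ).1 - ((f s : ℤ × ℤ)).1 = 0 := by rw [hcol s]; ring
    have h2 : 0 ≤ (s : ℤ × ℤ).2 - ((f s : ℤ × ℤ)).2 := by linarith [hdown s]
    simp [L1, h1, abs_of_nonneg h2]
  have hgbound : ∑ s : S, ((s : ℤ × ℤ).2 - ((g s : ℤ × ℤ)).2)
      ≤ ∑ s : S, L1 (s : ℤ × ℤ) (g s : ℤ × ℤ) := by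
    refine Finset.sum_le_sum fun s _ => ?_
    have := abs_nonneg ((s : ℤ × ℤ).1 - ((g s : ℤ × ℤ)).1)
    have := le_abs_self ((s : ℤ × ℤ).2 - ((g s : ℤ × ℤ)).2)
    simp only [L1]; linarith
  calc ∑ s : S, L1 (s : ℤ × ℤ) (f s : ℤ × ℤ)
      = ∑ s : S, ((s : ℤ × ℤ).2 - ((f s : ℤ × ℤ)).2) := hfsum
    _ = ∑ s : S, ((s : ℤ × ℤ).2 - ((g s : ℤ × ℤ)).2) := by
        rw [Finset.sum_sub_distrib, Finset.sum_sub_distrib, key f hf, key g hg]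
    _ ≤ ∑ s : S, L1 (s : ℤ × ℤ) (g s : ℤ × ℤ) := hgbound
end

section
/- A 2-scaled polyomino has no cut vertices: if a finite connected subset P of ℤ² is a union of disjoint 2×2 blocks aligned to the even grid (i.e., P is the preimage under the map (x,y) ↦ (⌊x/2⌋,⌊y/2⌋) of a connected set Q of cells), then for every tile p ∈ P, the set P \ {p} is still connected in the grid adjacency. -/
/-- Grid adjacency on ℤ²: cells differ by 1 in exactly one coordinate. -/
def GridAdj (p q : ℤ × ℤ) : Prop :=
  (|p.1 - q.1| = 1 ∧ p.2 = q.2) ∨ (p.1 = q.1 ∧ |p.2 - q.2| = 1)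

/-- A set of cells is connected under grid adjacency. -/
def GridConnected (P : Set (ℤ × ℤ)) : Prop :=
  ∀ p ∈ P, ∀ q ∈ P,
    Relation.ReflTransGen (fun a b => a ∈ P ∧ b ∈ P ∧ GridAdj a b) p q

/-- The 2-scaled version of a cell set. -/
def Scaled (Q : Set (ℤ × ℤ)) : Set (ℤ × ℤ) :=
  {p | ∃ a b i j : ℤ, (a, b) ∈ Q ∧ (i = 0 ∨ i = 1) ∧ (j = 0 ∨ j = 1) ∧
    p = (2 * a + i, 2 * b + j)}

theorem two_scaled_no_cut_vertices (Q : Set (ℤ × ℤ))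
    (hQne : Q.Nonempty) (hQ : GridConnected Q)
    (p : ℤ × ℤ) (hp : p ∈ Scaled Q) :
    GridConnected (Scaled Q \ {p}) := by
  obtain ⟨a₀, b₀, i₀, j₀, hQ₀, hi₀, hj₀, hpe⟩ := hp
  set R : ℤ × ℤ → ℤ × ℤ → Prop :=
    fun u v => u ∈ Scaled Q \ {p} ∧ v ∈ Scaled Q \ {p} ∧ GridAdj u v with hRdef
  have mem : ∀ a b i j : ℤ, (a, b) ∈ Q → (i = 0 ∨ i = 1) → (j = 0 ∨ j = 1) →
      (2 * a + i, 2 * b + j) ∈ Scaled Q :=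
    fun a b i j h hi hj => ⟨a, b, i, j, h, hi, hj, rfl⟩
  have safe_j : ∀ a b i : ℤ, ((2 * a + i, 2 * b + (1 - j₀)) : ℤ × ℤ) ≠ p := by
    intro a b i h
    rw [hpe, Prod.mk.injEq] at h
    omega
  have safe_i : ∀ a b j : ℤ, ((2 * a + (1 - i₀), 2 * b + j) : ℤ × ℤ) ≠ p := by
    intro a b j h
    rw [hpe, Prod.mk.injEq] at h
    omega
  have step : ∀ x y : ℤ × ℤ, x ∈ Scaled Q → y ∈ Scaled Q → x ≠ p → y ≠ p →
      (x = y ∨ GridAdj x y) → Relation.ReflTransGen R x y := by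
    intro x y hx hy hxp hyp h
    rcases h with rfl | h
    · exact .refl
    · exact .single ⟨⟨hx, hxp⟩, ⟨hy, hyp⟩, h⟩
  have hstep : ∀ x1 x2 y : ℤ, (x1 = x2 ∨ x1 - x2 = 1 ∨ x1 - x2 = -1) →
      ((x1, y) = ((x2, y) : ℤ × ℤ) ∨ GridAdj (x1, y) (x2, y)) := by
    rintro x1 x2 y (rfl | h | h)
    · exact Or.inl rfl
    · exact Or.inr (Or.inl ⟨by simp [h], rfl⟩)
    · exact Or.inr (Or.inl ⟨by simp [h], rfl⟩)
  have vstep : ∀ x y1 y2 : ℤ, (y1 = y2 ∨ y1 - y2 = 1 ∨ y1 - y2 = -1) →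
      ((x, y1) = ((x, y2) : ℤ × ℤ) ∨ GridAdj (x, y1) (x, y2)) := by
    rintro x y1 y2 (rfl | h | h)
    · exact Or.inl rfl
    · exact Or.inr (Or.inr ⟨rfl, by simp [h]⟩)
    · exact Or.inr (Or.inr ⟨rfl, by simp [h]⟩)
  have rsymm : ∀ x y, R x y → R y x := by
    rintro x y ⟨h1, h2, h3 | h3⟩
    · exact ⟨h2, h1, Or.inl ⟨by rw [abs_sub_comm]; exact h3.1, h3.2.symm⟩⟩
    · exact ⟨h2, h1, Or.inr ⟨h3.1.symm, by rw [abs_sub_comm]; exact h3.2⟩⟩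
  have rev : ∀ x y, Relation.ReflTransGen R x y → Relation.ReflTransGen R y x := by
    intro x y h
    induction h with
    | refl => exact .refl
    | tail _ h2 ih => exact Relation.ReflTransGen.head (rsymm _ _ h2) ih
  -- from any surviving cell to the "opposite" corner of its block
  have toOpp : ∀ a b i j : ℤ, (a, b) ∈ Q → (i = 0 ∨ i = 1) → (j = 0 ∨ j = 1) →
      ((2 * a + i, 2 * b + j) : ℤ × ℤ) ≠ p →
      Relation.ReflTransGen R (2 * a + i, 2 * b + j) (2 * a + (1 - i₀), 2 * b + (1 - j₀)) := by
    intro a b i j hab hi hj hne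
    refine .trans
      (step _ _ (mem a b i j hab hi hj) (mem a b i (1 - j₀) hab hi (by omega)) hne
        (safe_j a b i) (vstep _ _ _ (by omega)))
      (step _ _ (mem a b i (1 - j₀) hab hi (by omega))
        (mem a b (1 - i₀) (1 - j₀) hab (by omega) (by omega)) (safe_j a b i)
        (safe_j a b (1 - i₀)) (hstep _ _ _ (by omega)))
  -- crossing between horizontally adjacent blocks, through the safe row
  have crossH : ∀ a b : ℤ, (a, b) ∈ Q → (a + 1, b) ∈ Q →
      Relation.ReflTransGen R (2 * a + (1 - i₀), 2 * b + (1 - j₀))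
        (2 * (a + 1) + (1 - i₀), 2 * b + (1 - j₀)) := by
    intro a b h1 h2
    have m1 := mem a b (1 - i₀) (1 - j₀) h1 (by omega) (by omega)
    have m2 := mem a b 1 (1 - j₀) h1 (by omega) (by omega)
    have m3 := mem (a + 1) b 0 (1 - j₀) h2 (by omega) (by omega)
    have m4 := mem (a + 1) b (1 - i₀) (1 - j₀) h2 (by omega) (by omega)
    exact .trans
      (step _ _ m1 m2 (safe_j _ _ _) (safe_j _ _ _) (hstep _ _ _ (by omega)))
      (.trans
        (step _ _ m2 m3 (safe_j _ _ _) (safe_j _ _ _) (hstep _ _ _ (by omega)))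
        (step _ _ m3 m4 (safe_j _ _ _) (safe_j _ _ _) (hstep _ _ _ (by omega))))
  -- crossing between vertically adjacent blocks, through the safe column
  have crossV : ∀ a b : ℤ, (a, b) ∈ Q → (a, b + 1) ∈ Q →
      Relation.ReflTransGen R (2 * a + (1 - i₀), 2 * b + (1 - j₀))
        (2 * a + (1 - i₀), 2 * (b + 1) + (1 - j₀)) := by
    intro a b h1 h2
    have m1 := mem a b (1 - i₀) (1 - j₀) h1 (by omega) (by omega)
    have m2 := mem a b (1 - i₀) 1 h1 (by omega) (by omega)
    have m3 := mem a (b + 1) (1 - i₀) 0 h2 (by omega) (by omega)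
    have m4 := mem a (b + 1) (1 - i₀) (1 - j₀) h2 (by omega) (by omega)
    exact .trans
      (step _ _ m1 m2 (safe_i _ _ _) (safe_i _ _ _) (vstep _ _ _ (by omega)))
      (.trans
        (step _ _ m2 m3 (safe_i _ _ _) (safe_i _ _ _) (vstep _ _ _ (by omega)))
        (step _ _ m3 m4 (safe_i _ _ _) (safe_i _ _ _) (vstep _ _ _ (by omega))))
  have cross : ∀ a b a' b' : ℤ, (a, b) ∈ Q → (a', b') ∈ Q → GridAdj (a, b) (a', b') →
      Relation.ReflTransGen R (2 * a + (1 - i₀), 2 * b + (1 - j₀))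
        (2 * a' + (1 - i₀), 2 * b' + (1 - j₀)) := by
    intro a b a' b' h1 h2 hadj
    rcases hadj with ⟨h, e⟩ | ⟨e, h⟩
    · simp only at h e
      subst e
      rcases (abs_eq (by norm_num : (0:ℤ) ≤ 1)).mp h with h' | h'
      · obtain rfl : a = a' + 1 := by omega
        exact rev _ _ (crossH a' b h2 h1)
      · obtain rfl : a' = a + 1 := by omega
        exact crossH a b h1 h2
    · simp only at h e
      subst e
      rcases (abs_eq (by norm_num : (0:ℤ) ≤ 1)).mp h with h' | h'
      · obtain rfl : b = b' + 1 := by omega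
        exact rev _ _ (crossV a b' h2 h1)
      · obtain rfl : b' = b + 1 := by omega
        exact crossV a b h1 h2
  have lift : ∀ c d : ℤ × ℤ,
      Relation.ReflTransGen (fun u v => u ∈ Q ∧ v ∈ Q ∧ GridAdj u v) c d →
      Relation.ReflTransGen R (2 * c.1 + (1 - i₀), 2 * c.2 + (1 - j₀))
        (2 * d.1 + (1 - i₀), 2 * d.2 + (1 - j₀)) := by
    intro c d h
    induction h with
    | refl => exact .refl
    | tail _ h2 ih => exact ih.trans (cross _ _ _ _ h2.1 h2.2.1 h2.2.2)
  intro x hx y hy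
  obtain ⟨⟨a, b, i, j, hab, hi, hj, rfl⟩, hxp⟩ := hx
  obtain ⟨⟨a', b', i', j', hab', hi', hj', rfl⟩, hyp⟩ := hy
  exact (toOpp a b i j hab hi hj hxp).trans
    ((lift (a, b) (a', b') (hQ _ hab _ hab')).trans
      (rev _ _ (toOpp a' b' i' j' hab' hi' hj' hyp)))
end

section
/- Scaling preserves connectivity: a set Q ⊆ ℤ² is connected under grid adjacency if and only if its 2-scaled version P = {(2a+i, 2b+j) : (a,b) ∈ Q, i,j ∈ {0,1}} is connected under grid adjacency. -/
lemma gridAdj_iff (p q : ℤ × ℤ) : GridAdj p q ↔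
    ((p.1 = q.1 + 1 ∨ p.1 = q.1 - 1) ∧ p.2 = q.2) ∨
      (p.1 = q.1 ∧ (p.2 = q.2 + 1 ∨ p.2 = q.2 - 1)) := by
  unfold GridAdj
  rw [abs_eq (by norm_num : (0:ℤ) ≤ 1), abs_eq (by norm_num : (0:ℤ) ≤ 1)]
  constructor <;> intro h <;> omega

def projCell (p : ℤ × ℤ) : ℤ × ℤ := (p.1 / 2, p.2 / 2)

lemma projCell_mem {Q : Set (ℤ × ℤ)} {p : ℤ × ℤ} (h : p ∈ Scaled Q) :
    projCell p ∈ Q := by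
  obtain ⟨a, b, i, j, haQ, hi, hj, hp⟩ := h
  have : projCell p = (a, b) := by
    subst hp
    simp only [projCell]
    congr 1 <;> omega
  rwa [this]

lemma projCell_step {p q : ℤ × ℤ} (h : GridAdj p q) :
    projCell p = projCell q ∨ GridAdj (projCell p) (projCell q) := by
  rw [gridAdj_iff] at h
  simp only [projCell, gridAdj_iff, Prod.mk.injEq]
  omega

lemma mem_scaled {Q : Set (ℤ × ℤ)} {a b i j : ℤ} (h : (a, b) ∈ Q)
    (hi : i = 0 ∨ i = 1) (hj : j = 0 ∨ j = 1) :
    (2 * a + i, 2 * b + j) ∈ Scaled Q := ⟨a, b, i, j, h, hi, hj, rfl⟩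

theorem scaling_preserves_connectivity (Q : Set (ℤ × ℤ)) :
    GridConnected Q ↔ GridConnected (Scaled Q) := by
  set R : (ℤ × ℤ) → (ℤ × ℤ) → Prop :=
    fun a b => a ∈ Scaled Q ∧ b ∈ Scaled Q ∧ GridAdj a b with hR
  set R0 : (ℤ × ℤ) → (ℤ × ℤ) → Prop :=
    fun a b => a ∈ Q ∧ b ∈ Q ∧ GridAdj a b with hR0
  constructor
  · intro hQ
    -- block connectivity
    have block : ∀ a b i j : ℤ, (a, b) ∈ Q → (i = 0 ∨ i = 1) → (j = 0 ∨ j = 1) →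
        Relation.ReflTransGen R (2 * a, 2 * b) (2 * a + i, 2 * b + j) := by
      intro a b i j hab hi hj
      have h00 : (2 * a, 2 * b) ∈ Scaled Q := by
        have := mem_scaled hab (Or.inl rfl) (Or.inl rfl)
        simpa using this
      have hij : (2 * a + i, 2 * b + j) ∈ Scaled Q := mem_scaled hab hi hj
      have hi0 : (2 * a + i, 2 * b) ∈ Scaled Q := by
        have := mem_scaled hab hi (Or.inl (rfl : (0:ℤ) = 0))
        simpa using this
      have s1 : Relation.ReflTransGen R (2 * a, 2 * b) (2 * a + i, 2 * b) := by
        rcases hi with rfl | rfl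
        · simp only [add_zero]
          exact Relation.ReflTransGen.refl
        · exact Relation.ReflTransGen.single ⟨h00, hi0, by rw [gridAdj_iff]; simp⟩
      have s2 : Relation.ReflTransGen R (2 * a + i, 2 * b) (2 * a + i, 2 * b + j) := by
        rcases hj with rfl | rfl
        · simp only [add_zero]
          exact Relation.ReflTransGen.refl
        · exact Relation.ReflTransGen.single ⟨hi0, hij, by rw [gridAdj_iff]; simp⟩
      exact s1.trans s2
    -- corner-to-corner for adjacent base cells
    have corner : ∀ u v : ℤ × ℤ, R0 u v →
        Relation.ReflTransGen R (2 * u.1, 2 * u.2) (2 * v.1, 2 * v.2) := by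
      rintro ⟨a, b⟩ ⟨c, d⟩ ⟨hu, hv, hadj⟩
      rw [gridAdj_iff] at hadj
      have hu0 : ((2 * a : ℤ), (2 * b : ℤ)) ∈ Scaled Q := by
        have := mem_scaled hu (Or.inl rfl) (Or.inl rfl); simpa using this
      have hv0 : ((2 * c : ℤ), (2 * d : ℤ)) ∈ Scaled Q := by
        have := mem_scaled hv (Or.inl rfl) (Or.inl rfl); simpa using this
      simp only at hadj
      rcases hadj with ⟨h1 | h1, h2⟩ | ⟨h1, h2 | h2⟩
      · -- a = c + 1
        have hm : ((2 * c + 1 : ℤ), (2 * d + 0 : ℤ)) ∈ Scaled Q :=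
          mem_scaled hv (Or.inr rfl) (Or.inl rfl)
        refine Relation.ReflTransGen.head ⟨hu0, hm, ?_⟩
          (Relation.ReflTransGen.single ⟨hm, hv0, ?_⟩) <;>
          · first
            | (rw [gridAdj_iff]; simp; omega)
            | (rw [gridAdj_iff]; simp)
      · -- a = c - 1
        have hm : ((2 * a + 1 : ℤ), (2 * b + 0 : ℤ)) ∈ Scaled Q :=
          mem_scaled hu (Or.inr rfl) (Or.inl rfl)
        refine Relation.ReflTransGen.head ⟨hu0, hm, ?_⟩
          (Relation.ReflTransGen.single ⟨hm, hv0, ?_⟩) <;>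
          · first
            | (rw [gridAdj_iff]; simp; omega)
            | (rw [gridAdj_iff]; simp)
      · have hm : ((2 * c + 0 : ℤ), (2 * d + 1 : ℤ)) ∈ Scaled Q :=
          mem_scaled hv (Or.inl rfl) (Or.inr rfl)
        refine Relation.ReflTransGen.head ⟨hu0, hm, ?_⟩
          (Relation.ReflTransGen.single ⟨hm, hv0, ?_⟩) <;>
          · first
            | (rw [gridAdj_iff]; simp; omega)
            | (rw [gridAdj_iff]; simp)
      · have hm : ((2 * a + 0 : ℤ), (2 * b + 1 : ℤ)) ∈ Scaled Q :=
          mem_scaled hu (Or.inl rfl) (Or.inr rfl)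
        refine Relation.ReflTransGen.head ⟨hu0, hm, ?_⟩
          (Relation.ReflTransGen.single ⟨hm, hv0, ?_⟩) <;>
          · first
            | (rw [gridAdj_iff]; simp; omega)
            | (rw [gridAdj_iff]; simp)
    have Rsymm : ∀ {u v}, R u v → R v u := by
      rintro u v ⟨h1, h2, h3⟩
      refine ⟨h2, h1, ?_⟩
      rw [gridAdj_iff] at h3 ⊢; omega
    intro p hp q hq
    obtain ⟨a, b, i, j, haQ, hi, hj, hp'⟩ := hp
    obtain ⟨c, d, k, l, hcQ, hk, hl, hq'⟩ := hq
    have path0 := hQ (a, b) haQ (c, d) hcQ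
    have lift : ∀ x y : ℤ × ℤ, Relation.ReflTransGen R0 x y →
        Relation.ReflTransGen R (2 * x.1, 2 * x.2) (2 * y.1, 2 * y.2) := by
      intro x y h
      induction h with
      | refl => exact Relation.ReflTransGen.refl
      | tail _ hstep ih => exact ih.trans (corner _ _ hstep)
    have corners : Relation.ReflTransGen R (2 * a, 2 * b) (2 * c, 2 * d) :=
      lift (a, b) (c, d) path0
    have p1 : Relation.ReflTransGen R (2 * a, 2 * b) p := by
      rw [hp']; exact block a b i j haQ hi hj
    have p2 : Relation.ReflTransGen R (2 * c, 2 * d) q := by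
      rw [hq']; exact block c d k l hcQ hk hl
    have p1' : Relation.ReflTransGen R p (2 * a, 2 * b) :=
      (@Relation.ReflTransGen.stdSymm _ R ⟨fun _ _ h => Rsymm h⟩).symm _ _ p1
    exact (p1'.trans corners).trans p2
  · intro hP
    rintro ⟨a, b⟩ hu ⟨c, d⟩ hv
    have hu' : ((2 * a : ℤ), (2 * b : ℤ)) ∈ Scaled Q := by
      have := mem_scaled hu (Or.inl rfl) (Or.inl rfl); simpa using this
    have hv' : ((2 * c : ℤ), (2 * d : ℤ)) ∈ Scaled Q := by
      have := mem_scaled hv (Or.inl rfl) (Or.inl rfl); simpa using this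
    have path := hP _ hu' _ hv'
    have key : ∀ x y : ℤ × ℤ, Relation.ReflTransGen R x y →
        Relation.ReflTransGen R0 (projCell x) (projCell y) := by
      intro x y h
      induction h with
      | refl => exact Relation.ReflTransGen.refl
      | tail _ hstep ih =>
        obtain ⟨hw, hz, hadj⟩ := hstep
        rcases projCell_step hadj with heq | hadj'
        · rwa [← heq]
        · exact ih.tail ⟨projCell_mem hw, projCell_mem hz, hadj'⟩
    have := key _ _ path
    have e1 : projCell ((2 * a : ℤ), (2 * b : ℤ)) = (a, b) := by
      simp only [projCell]; congr 1 <;> omega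
    have e2 : projCell ((2 * c : ℤ), (2 * d : ℤ)) = (c, d) := by
      simp only [projCell]; congr 1 <;> omega
    rwa [e1, e2] at this
end
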